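/- arXiv:1707.03220 — 5 statements merged into one kernel-verified Lean document; each statement's English description precedes it below -/
import Mathlib

section
/- In the partitioning setup, let K_x ∈ H denote the representer of evaluation at x for the global RKHS H (i.e., ⟨f, K_x⟩_H = f(x) for all f ∈ H; explicitly, for x ∈ X_j, K_x has j-th component p_j⁻¹Φ_j(x) and zero other components). Then the global covariance operator T := ∫_X K_x ⊗_H K_x dν(x) (with (u⊗_H u)h = ⟨h,u⟩_H u, the outer product taken with respect to the weighted inner product of H) is block diagonal with respect to the decomposition H = ⊕_j H_j, and acts on the j-th component as the local covariance operator: (Th)_j = T_j h_j for all h = h₁+…+h_m ∈ H, where T_j = ∫_{X_j} Φ_j(x)⊗Φ_j(x) dν_j(x); equivalently T = Σ_j p_j⁻¹ T̃_j, where T̃_j := ∫_{X_j} Φ_j(x)⊗Φ_j(x) dν(x) = p_j T_j. -/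
open MeasureTheory ProbabilityTheory Real Filter
open scoped ENNReal NNReal BigOperators InnerProductSpace

noncomputable section

/-- The rank-one operator `(u ⊗ u) h = ⟪h, u⟫ u`. -/
def rankOne {H : Type*} [NormedAddCommGroup H] [InnerProductSpace ℝ H] (u : H) : H →L[ℝ] H :=
  (innerSL ℝ u).smulRight u

/-- The empirical covariance operator `T_x = n⁻¹ ∑ᵢ Φ(xᵢ) ⊗ Φ(xᵢ)`. -/
def empCov {X H : Type*} [NormedAddCommGroup H] [InnerProductSpace ℝ H] {n : ℕ}
    (Φ : X → H) (x : Fin n → X) : H →L[ℝ] H :=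
  (n : ℝ)⁻¹ • ∑ i, rankOne (Φ (x i))

/-- `S*_x y = n⁻¹ ∑ᵢ yᵢ Φ(xᵢ)`. -/
def empMean {X H : Type*} [NormedAddCommGroup H] [InnerProductSpace ℝ H] {n : ℕ}
    (Φ : X → H) (x : Fin n → X) (y : Fin n → ℝ) : H :=
  (n : ℝ)⁻¹ • ∑ i, y i • Φ (x i)

/-- Effective dimension `N(T, λ) = Tr[(T+λ)⁻¹T] = ∑ᵢ μᵢ/(μᵢ+λ)` of a positive self-adjoint
trace-class operator with eigenvalues `μ` (counted with multiplicity). -/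
def effDim {ι : Type*} (μ : ι → ℝ) (lam : ℝ) : ℝ := ∑' i, μ i / (μ i + lam)

/-- `B_k(T,λ) = 1 + (2/(kλ) + √(N(T,λ)/(kλ)))²`. -/
def Bconst {ι : Type*} (μ : ι → ℝ) (k lam : ℝ) : ℝ :=
  1 + (2 / (k * lam) + Real.sqrt (effDim μ lam / (k * lam))) ^ 2

/-- The conditional probability measure `ν(· | A) = ν(A)⁻¹ ν(· ∩ A)`. -/
def condMeasure {X : Type*} [MeasurableSpace X] (ν : Measure X) (A : Set X) : Measure X :=
  (ν A)⁻¹ • ν.restrict A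

/-- `P` is the orthogonal projection onto the subspace `S`. -/
def IsOrthoProjOnto {H : Type*} [NormedAddCommGroup H] [InnerProductSpace ℝ H]
    (P : H →L[ℝ] H) (S : Submodule ℝ H) : Prop :=
  P ∘L P = P ∧ (∀ u v : H, ⟪P u, v⟫_ℝ = ⟪u, P v⟫_ℝ) ∧ LinearMap.range (P : H →ₗ[ℝ] H) = S

/-- The Nyström operator `g_{λ,l}(T_x) = (P T_x P + λ)⁻¹ P`, which coincides with
`A⁻¹ P` for `A = (P T_x P + λ)|_{ran P} : ran P → ran P`. -/
def nysOp {H : Type*} [NormedAddCommGroup H] [InnerProductSpace ℝ H]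
    (lam : ℝ) (T P : H →L[ℝ] H) : H →L[ℝ] H :=
  (Ring.inverse (P ∘L T ∘L P + lam • (1 : H →L[ℝ] H))) ∘L P

/-- the global covariance operator `T = ∫ K_x ⊗_H K_x dν` of the weighted
direct-sum RKHS `H = ⊕_j H_j` is block diagonal and acts as `T_j` on the `j`-th component;
equivalently `T_j = p_j⁻¹ T̃_j` where `T̃_j = ∫_{X_j} Φ_j(x) ⊗ Φ_j(x) dν(x)`.
The operators are characterized weakly: `⟪T h, h'⟫_H = ∫ h(x) h'(x) dν(x)` where
`h(x) = ⟪h_j, Φ_j(x)⟫` for `x ∈ X_j` (zero-extension), and the weighted inner product is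
`⟪h, h'⟫_H = ∑_j p_j ⟪h_j, h'_j⟫`. -/
theorem stmt6 {X : Type} [MeasurableSpace X] (ν : Measure X) [IsProbabilityMeasure ν]
    (m : ℕ) (Xs : Fin m → Set X)
    (hXmeas : ∀ j, MeasurableSet (Xs j))
    (hXdisj : ∀ j k, j ≠ k → Disjoint (Xs j) (Xs k))
    (hXcover : (⋃ j, Xs j) = Set.univ)
    (hppos : ∀ j, 0 < ν (Xs j))
    (H : Fin m → Type) [∀ j, NormedAddCommGroup (H j)] [∀ j, InnerProductSpace ℝ (H j)]
    [∀ j, CompleteSpace (H j)]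
    (Φ : ∀ j, X → H j) (hΦmeas : ∀ j, StronglyMeasurable (Φ j))
    (κ : Fin m → ℝ) (hκ : ∀ j, ∀ x ∈ Xs j, ‖Φ j x‖ ^ 2 ≤ κ j ^ 2)
    -- the local covariance operators T_j = ∫ Φ_j ⊗ Φ_j dν_j
    (Tloc : ∀ j, H j →L[ℝ] H j)
    (hTloc : ∀ j (u v : H j), ⟪Tloc j u, v⟫_ℝ
      = ∫ x, ⟪u, Φ j x⟫_ℝ * ⟪v, Φ j x⟫_ℝ ∂(condMeasure ν (Xs j)))
    -- the operators T̃_j = ∫_{X_j} Φ_j ⊗ Φ_j dν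
    (Ttil : ∀ j, H j →L[ℝ] H j)
    (hTtil : ∀ j (u v : H j), ⟪Ttil j u, v⟫_ℝ
      = ∫ x in Xs j, ⟪u, Φ j x⟫_ℝ * ⟪v, Φ j x⟫_ℝ ∂ν)
    -- the global covariance operator, characterized weakly w.r.t. the weighted inner product
    (Tglob : PiLp 2 H →L[ℝ] PiLp 2 H)
    (hTglob : ∀ h h' : PiLp 2 H,
      ∑ j, (ν (Xs j)).toReal * ⟪Tglob h j, h' j⟫_ℝ
        = ∫ x, (∑ j, (Xs j).indicator (fun x' => ⟪h j, Φ j x'⟫_ℝ) x)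
            * (∑ j, (Xs j).indicator (fun x' => ⟪h' j, Φ j x'⟫_ℝ) x) ∂ν) :
    (∀ (h : PiLp 2 H) (j : Fin m), Tglob h j = Tloc j (h j)) ∧
    (∀ j, Ttil j = (ν (Xs j)).toReal • Tloc j) := by
  have hfin : ∀ j, ν (Xs j) ≠ ⊤ := fun j => measure_ne_top ν _
  have hppos' : ∀ j, 0 < (ν (Xs j)).toReal :=
    fun j => ENNReal.toReal_pos (hppos j).ne' (hfin j)
  have key : ∀ j (u v : H j), ⟪Ttil j u, v⟫_ℝ = (ν (Xs j)).toReal * ⟪Tloc j u, v⟫_ℝ := by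
    intro j u v
    rw [hTloc, hTtil, condMeasure, integral_smul_measure, ENNReal.toReal_inv,
      smul_eq_mul, ← mul_assoc, mul_inv_cancel₀ (hppos' j).ne', one_mul]
  have part2 : ∀ j, Ttil j = (ν (Xs j)).toReal • Tloc j := by
    intro j
    ext u
    apply ext_inner_right ℝ
    intro v
    rw [key]
    simp [real_inner_smul_left]
  refine ⟨?_, part2⟩
  intro h k
  apply ext_inner_right ℝ
  intro v
  have hg := hTglob h (WithLp.toLp 2 (Pi.single k v))
  simp only [WithLp.ofLp_toLp] at hg
  have hL : ∑ j, (ν (Xs j)).toReal * ⟪Tglob h j, Pi.single k v j⟫_ℝ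
      = (ν (Xs k)).toReal * ⟪Tglob h k, v⟫_ℝ := by
    rw [Finset.sum_eq_single k]
    · simp
    · intro j _ hj
      simp [Pi.single_eq_of_ne hj]
    · simp
  have hR : ∀ x, (∑ j, (Xs j).indicator (fun x' => ⟪h j, Φ j x'⟫_ℝ) x)
      * (∑ j, (Xs j).indicator (fun x' => ⟪Pi.single k v j, Φ j x'⟫_ℝ) x)
      = (Xs k).indicator (fun x' => ⟪h k, Φ k x'⟫_ℝ * ⟪v, Φ k x'⟫_ℝ) x := by
    intro x
    have h2 : (∑ j, (Xs j).indicator (fun x' => ⟪Pi.single k v j, Φ j x'⟫_ℝ) x)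
        = (Xs k).indicator (fun x' => ⟪v, Φ k x'⟫_ℝ) x := by
      rw [Finset.sum_eq_single k]
      · simp
      · intro j _ hj
        simp [Pi.single_eq_of_ne hj, Set.indicator]
      · simp
    rw [h2]
    by_cases hx : x ∈ Xs k
    · rw [Set.indicator_of_mem hx, Set.indicator_of_mem hx]
      congr 1
      rw [Finset.sum_eq_single k]
      · rw [Set.indicator_of_mem hx]
      · intro j _ hj
        have hxj : x ∉ Xs j := fun hxj => (hXdisj j k hj).le_bot ⟨hxj, hx⟩
        simp [Set.indicator_of_notMem hxj]
      · simp
    · simp [Set.indicator_of_notMem hx]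
  rw [hL] at hg
  simp_rw [hR] at hg
  rw [integral_indicator (hXmeas k), ← hTtil, key] at hg
  exact mul_left_cancel₀ (hppos' k).ne' hg
end
end

section
/- In the partitioning setup, suppose that for each j ∈ {1,…,m} there are r_j ∈ (0,1/2] and R < ∞ with f_j = T_j^{r_j} g_j for some g_j ∈ H_j with ‖g_j‖_{H_j} ≤ R. Set r := min_j r_j. Then f_ρ = f₁+…+f_m satisfies the global source condition: there exists g ∈ H with f_ρ = T^r g and ‖g‖_H ≤ R·max_j max(1, κ_j²)^{r_j − r}, where T is the global covariance operator (block diagonal, acting as T_j on the j-th summand) and T^r is defined by the functional calculus blockwise. -/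
open MeasureTheory ProbabilityTheory Real Filter
open scoped ENNReal NNReal BigOperators InnerProductSpace

noncomputable section

/-- local source conditions `f_j = T_j^{r_j} g_j`, `‖g_j‖ ≤ R`, imply the global
source condition `f_ρ = T^r g` with `r = min_j r_j` and
`‖g‖_H ≤ R · max_j max(1,κ_j²)^{r_j−r}`, where `T` is the block-diagonal global covariance
operator and fractional powers are taken blockwise via the functional calculus (expressed
through the diagonalizing bases `b_j` of the `T_j`). -/
theorem stmt7 {X : Type} [MeasurableSpace X] (ν : Measure X) [IsProbabilityMeasure ν]
    (m : ℕ) [NeZero m] (Xs : Fin m → Set X)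
    (hXmeas : ∀ j, MeasurableSet (Xs j))
    (hXdisj : ∀ j k, j ≠ k → Disjoint (Xs j) (Xs k))
    (hXcover : (⋃ j, Xs j) = Set.univ)
    (hppos : ∀ j, 0 < ν (Xs j))
    (H : Fin m → Type) [∀ j, NormedAddCommGroup (H j)] [∀ j, InnerProductSpace ℝ (H j)]
    [∀ j, CompleteSpace (H j)]
    (Φ : ∀ j, X → H j) (hΦmeas : ∀ j, StronglyMeasurable (Φ j))
    (κ : Fin m → ℝ) (hκ : ∀ j, ∀ x ∈ Xs j, ‖Φ j x‖ ^ 2 ≤ κ j ^ 2)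
    (T : ∀ j, H j →L[ℝ] H j)
    (hTcov : ∀ j (u v : H j), ⟪T j u, v⟫_ℝ
      = ∫ x, ⟪u, Φ j x⟫_ℝ * ⟪v, Φ j x⟫_ℝ ∂(condMeasure ν (Xs j)))
    (b : ∀ j, HilbertBasis ℕ ℝ (H j)) (μ : Fin m → ℕ → ℝ)
    (hμnn : ∀ j i, 0 ≤ μ j i) (hμsum : ∀ j, Summable (μ j))
    (hdiag : ∀ j i, T j (b j i) = μ j i • b j i)
    (f : ∀ j, H j)
    (rj : Fin m → ℝ) (hrj : ∀ j, rj j ∈ Set.Ioc (0:ℝ) (1/2))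
    (r : ℝ) (hr : IsLeast (Set.range rj) r)
    (R : ℝ) (hR : 0 < R)
    -- local source conditions: f_j = T_j^{r_j} g_j with ‖g_j‖ ≤ R
    (hsource : ∀ j, ∃ g : H j, ‖g‖ ≤ R ∧
      ∀ i, ⟪f j, b j i⟫_ℝ = μ j i ^ rj j * ⟪g, b j i⟫_ℝ) :
    -- global source condition: f_ρ = T^r g with the stated bound on the weighted norm of g
    ∃ g : ∀ j, H j,
      ∑ j, (ν (Xs j)).toReal * ‖g j‖ ^ 2
        ≤ (R * Finset.univ.sup' Finset.univ_nonempty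
            (fun j => max 1 (κ j ^ 2) ^ (rj j - r))) ^ 2 ∧
      ∀ j i, ⟪f j, b j i⟫_ℝ = μ j i ^ r * ⟪g j, b j i⟫_ℝ := by
  
  classical
  choose g0 hg0R hg0 using hsource
  set C : Fin m → ℝ := fun j => max 1 (κ j ^ 2) ^ (rj j - r) with hCdef
  set S : ℝ := Finset.univ.sup' Finset.univ_nonempty
      (fun j => max 1 (κ j ^ 2) ^ (rj j - r)) with hSdef
  have hrle : ∀ j, r ≤ rj j := fun j => hr.2 ⟨j, rfl⟩
  have hrpos : 0 < r := by
    obtain ⟨j, hj⟩ := hr.1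
    exact hj ▸ (hrj j).1
  -- conditional measures are probability measures
  have hprob : ∀ j, IsProbabilityMeasure (condMeasure ν (Xs j)) := by
    intro j
    refine ⟨?_⟩
    simp only [condMeasure, Measure.smul_apply, Measure.restrict_apply_univ, smul_eq_mul]
    exact ENNReal.inv_mul_cancel (hppos j).ne' (measure_ne_top ν _)
  -- eigenvalue bound
  have hμle : ∀ j i, μ j i ≤ max 1 (κ j ^ 2) := by
    intro j i
    haveI := hprob j
    have hb1 : ⟪b j i, b j i⟫_ℝ = 1 := by
      have h := (b j).orthonormal.1 i
      rw [real_inner_self_eq_norm_sq, h, one_pow]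
    have h1 : μ j i = ∫ x, ⟪b j i, Φ j x⟫_ℝ * ⟪b j i, Φ j x⟫_ℝ
        ∂(condMeasure ν (Xs j)) := by
      have h := hTcov j (b j i) (b j i)
      rw [hdiag j i, real_inner_smul_left, hb1, mul_one] at h
      exact h
    have hκnn : 0 ≤ κ j ^ 2 := by
      obtain ⟨x, hx⟩ : (Xs j).Nonempty := by
        by_contra hne
        rw [Set.not_nonempty_iff_eq_empty] at hne
        simpa [hne] using hppos j
      exact le_trans (sq_nonneg _) (hκ j x hx)
    have hae : ∀ᵐ x ∂(condMeasure ν (Xs j)),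
        ⟪b j i, Φ j x⟫_ℝ * ⟪b j i, Φ j x⟫_ℝ ≤ κ j ^ 2 := by
      rw [condMeasure, Measure.ae_ennreal_smul_measure_eq
        (by simp [(hppos j).ne', measure_ne_top ν])]
      filter_upwards [ae_restrict_mem (hXmeas j)] with x hx
      calc ⟪b j i, Φ j x⟫_ℝ * ⟪b j i, Φ j x⟫_ℝ = |⟪b j i, Φ j x⟫_ℝ| ^ 2 := by
            rw [sq_abs]; ring
        _ ≤ (‖b j i‖ * ‖Φ j x‖) ^ 2 := by
            apply pow_le_pow_left₀ (abs_nonneg _) (abs_real_inner_le_norm _ _)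
        _ = ‖Φ j x‖ ^ 2 := by rw [(b j).orthonormal.1 i]; ring
        _ ≤ κ j ^ 2 := hκ j x hx
    calc μ j i = ∫ x, ⟪b j i, Φ j x⟫_ℝ * ⟪b j i, Φ j x⟫_ℝ
          ∂(condMeasure ν (Xs j)) := h1
      _ ≤ ∫ _, κ j ^ 2 ∂(condMeasure ν (Xs j)) :=
          integral_mono_of_nonneg (Filter.Eventually.of_forall fun x => mul_self_nonneg _)
            (integrable_const _) hae
      _ = κ j ^ 2 := by simp
      _ ≤ max 1 (κ j ^ 2) := le_max_right _ _
  have hCnn : ∀ j, 0 ≤ C j := fun j => Real.rpow_nonneg (le_trans zero_le_one (le_max_left _ _)) _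
  have hμpow : ∀ j i, μ j i ^ (rj j - r) ≤ C j := fun j i =>
    Real.rpow_le_rpow (hμnn j i) (hμle j i) (sub_nonneg.2 (hrle j))
  -- construct g blockwise
  have key : ∀ j : Fin m, ∃ gj : H j, ‖gj‖ ^ 2 ≤ (R * C j) ^ 2 ∧
      ∀ i, ⟪f j, b j i⟫_ℝ = μ j i ^ r * ⟪gj, b j i⟫_ℝ := by
    intro j
    set a : ℕ → ℝ := fun i => μ j i ^ (rj j - r) * ⟪g0 j, b j i⟫_ℝ with hadef
    have hs0 : HasSum (fun i => ⟪g0 j, b j i⟫_ℝ * ⟪g0 j, b j i⟫_ℝ) ⟪g0 j, g0 j⟫_ℝ := by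
      have h := (b j).hasSum_inner_mul_inner (g0 j) (g0 j)
      simpa [real_inner_comm] using h
    have habs : ∀ i, |a i| ≤ C j * |⟪g0 j, b j i⟫_ℝ| := by
      intro i
      rw [hadef, abs_mul, abs_of_nonneg (Real.rpow_nonneg (hμnn j i) _)]
      exact mul_le_mul_of_nonneg_right (hμpow j i) (abs_nonneg _)
    have hsqle : ∀ i, a i * a i ≤ C j ^ 2 * (⟪g0 j, b j i⟫_ℝ * ⟪g0 j, b j i⟫_ℝ) := by
      intro i
      have := mul_le_mul (habs i) (habs i) (abs_nonneg _)
        (mul_nonneg (hCnn j) (abs_nonneg _))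
      calc a i * a i = |a i| * |a i| := (abs_mul_abs_self _).symm
        _ ≤ (C j * |⟪g0 j, b j i⟫_ℝ|) * (C j * |⟪g0 j, b j i⟫_ℝ|) := this
        _ = C j ^ 2 * (⟪g0 j, b j i⟫_ℝ * ⟪g0 j, b j i⟫_ℝ) := by
            rw [← abs_mul_abs_self ⟪g0 j, b j i⟫_ℝ]; ring
    have hsummaj : Summable (fun i => C j ^ 2 * (⟪g0 j, b j i⟫_ℝ * ⟪g0 j, b j i⟫_ℝ)) :=
      hs0.summable.mul_left _
    have hsuma : Summable (fun i => a i * a i) :=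
      Summable.of_nonneg_of_le (fun i => mul_self_nonneg _) hsqle hsummaj
    have hmem : Memℓp a 2 := by
      apply memℓp_gen
      have : (fun i => ‖a i‖ ^ (2 : ℝ≥0∞).toReal) = fun i => a i * a i := by
        funext i
        rw [ENNReal.toReal_ofNat, show ((2:ℝ)) = ((2:ℕ):ℝ) by norm_num,
          Real.rpow_natCast, Real.norm_eq_abs]
        rw [pow_two, abs_mul_abs_self]
      rw [this]
      exact hsuma
    set gj : H j := (b j).repr.symm ⟨a, hmem⟩ with hgjdef
    have hcoef : ∀ i, ⟪gj, b j i⟫_ℝ = a i := by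
      intro i
      rw [real_inner_comm, ← (b j).repr_apply_apply, hgjdef,
        LinearIsometryEquiv.apply_symm_apply]
    refine ⟨gj, ?_, ?_⟩
    · have hgsum : HasSum (fun i => a i * a i) ⟪gj, gj⟫_ℝ := by
        have h := (b j).hasSum_inner_mul_inner gj gj
        have : (fun i => ⟪gj, b j i⟫_ℝ * ⟪b j i, gj⟫_ℝ) = fun i => a i * a i := by
          funext i
          rw [← hcoef i]
          congr 1
          exact real_inner_comm _ _
        rwa [this] at h
      have h1 : ⟪gj, gj⟫_ℝ ≤ C j ^ 2 * ⟪g0 j, g0 j⟫_ℝ :=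
        hasSum_le hsqle hgsum (hs0.mul_left _)
      calc ‖gj‖ ^ 2 = ⟪gj, gj⟫_ℝ := (real_inner_self_eq_norm_sq gj).symm
        _ ≤ C j ^ 2 * ⟪g0 j, g0 j⟫_ℝ := h1
        _ = C j ^ 2 * ‖g0 j‖ ^ 2 := by rw [real_inner_self_eq_norm_sq]
        _ ≤ C j ^ 2 * R ^ 2 := by
            apply mul_le_mul_of_nonneg_left _ (sq_nonneg _)
            exact pow_le_pow_left₀ (norm_nonneg _) (hg0R j) 2
        _ = (R * C j) ^ 2 := by ring
    · intro i
      rw [hcoef i, hg0 j i]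
      show μ j i ^ rj j * ⟪g0 j, b j i⟫_ℝ
        = μ j i ^ r * (μ j i ^ (rj j - r) * ⟪g0 j, b j i⟫_ℝ)
      by_cases hμ0 : μ j i = 0
      · simp [hμ0, Real.zero_rpow hrpos.ne', Real.zero_rpow (hrj j).1.ne']
      · have hμpos : 0 < μ j i := lt_of_le_of_ne (hμnn j i) (Ne.symm hμ0)
        have hsplit : μ j i ^ rj j = μ j i ^ r * μ j i ^ (rj j - r) := by
          rw [← Real.rpow_add hμpos]
          congr 1
          ring
        rw [hsplit]
        ring
  choose g hgnorm hgcoef using key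
  refine ⟨g, ?_, hgcoef⟩
  -- the norm bound
  have hSnn : 0 ≤ S := le_trans (hCnn ⟨0, Nat.pos_of_ne_zero (NeZero.ne m)⟩)
    (Finset.le_sup' _ (Finset.mem_univ _))
  have hCleS : ∀ j, C j ≤ S := fun j => Finset.le_sup' _ (Finset.mem_univ j)
  have hpsum : ∑ j, (ν (Xs j)).toReal = 1 := by
    have hU : ∑ j, ν (Xs j) = ν Set.univ := by
      rw [← hXcover, measure_iUnion (fun j k hjk => hXdisj j k hjk) hXmeas, tsum_fintype]
    rw [← ENNReal.toReal_sum (fun j _ => measure_ne_top ν _), hU, measure_univ,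
      ENNReal.toReal_one]
  calc ∑ j, (ν (Xs j)).toReal * ‖g j‖ ^ 2
      ≤ ∑ j, (ν (Xs j)).toReal * (R * S) ^ 2 := by
        apply Finset.sum_le_sum
        intro j _
        apply mul_le_mul_of_nonneg_left _ ENNReal.toReal_nonneg
        calc ‖g j‖ ^ 2 ≤ (R * C j) ^ 2 := hgnorm j
          _ ≤ (R * S) ^ 2 := by
              apply pow_le_pow_left₀ (mul_nonneg hR.le (hCnn j))
              exact mul_le_mul_of_nonneg_left (hCleS j) hR.le
    _ = (R * S) ^ 2 := by rw [← Finset.sum_mul, hpsum, one_mul]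
end
end

section
/- Let T be a bounded positive self-adjoint operator on a separable real Hilbert space H, λ > 0, and P an orthogonal projection on H (P = VV* for a partial isometry V). Define the computational error C_u(P,λ) := ‖(Id − P)(T+λ)^u‖ for u ∈ [0,1/2], with fractional powers via the functional calculus. Then for every u ∈ [0,1/2], C_u(P,λ) ≤ C_{1/2}(P,λ)^{2u}. -/
open MeasureTheory ProbabilityTheory Real Filter
open scoped ENNReal NNReal BigOperators InnerProductSpace

noncomputable section

/-- Dyadic step of midpoint convexity. -/
lemma aux_dyadic {g : ℝ → ℝ} (hm : ∀ s t : ℝ, g ((s + t) / 2) ≤ (g s + g t) / 2) :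
    ∀ n : ℕ, ∀ k : ℕ, k ≤ 2 ^ n →
      g ((k : ℝ) / 2 ^ n) ≤ (1 - (k : ℝ) / 2 ^ n) * g 0 + ((k : ℝ) / 2 ^ n) * g 1 := by
  intro n
  induction n with
  | zero =>
    intro k hk
    interval_cases k <;> simp
  | succ n ih =>
    intro k hk
    have h2n : (0:ℝ) < 2 ^ n := by positivity
    rcases Nat.even_or_odd k with ⟨j, hj⟩ | ⟨j, hj⟩
    · subst hj
      have hj2 : j ≤ 2 ^ n := by
        have : 2 ^ (n+1) = 2 ^ n + 2 ^ n := by ring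
        omega
      have heq : ((j + j : ℕ) : ℝ) / 2 ^ (n+1) = (j : ℝ) / 2 ^ n := by
        push_cast
        field_simp
        ring
      rw [heq]
      exact ih j hj2
    · subst hj
      have hj1 : j + 1 ≤ 2 ^ n := by
        have : 2 ^ (n+1) = 2 ^ n + 2 ^ n := by ring
        omega
      have h1 := ih j (by omega)
      have h2 := ih (j + 1) hj1
      set a : ℝ := (j : ℝ) / 2 ^ n with ha
      set b : ℝ := ((j + 1 : ℕ) : ℝ) / 2 ^ n with hb
      have heq : ((2 * j + 1 : ℕ) : ℝ) / 2 ^ (n+1) = (a + b) / 2 := by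
        rw [ha, hb]
        push_cast
        field_simp
        ring
      rw [heq]
      have key := hm a b
      linarith

/-- Midpoint convex + continuous gives the two-point interpolation bound. -/
lemma midpt_interp {g : ℝ → ℝ} (hc : Continuous g)
    (hm : ∀ s t : ℝ, g ((s + t) / 2) ≤ (g s + g t) / 2)
    {θ : ℝ} (h0 : 0 ≤ θ) (h1 : θ ≤ 1) : g θ ≤ (1 - θ) * g 0 + θ * g 1 := by
  set c : ℕ → ℝ := fun n => (⌊θ * 2 ^ n⌋₊ : ℝ) / 2 ^ n with hc_def
  have hub : ∀ n, c n ≤ θ := by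
    intro n
    have h2n : (0:ℝ) < 2 ^ n := by positivity
    rw [hc_def, div_le_iff₀ h2n]
    exact Nat.floor_le (by positivity)
  have hlb : ∀ n, θ - (1/2 : ℝ) ^ n ≤ c n := by
    intro n
    have h2n : (0:ℝ) < 2 ^ n := by positivity
    have hfl : θ * 2 ^ n < (⌊θ * 2 ^ n⌋₊ : ℝ) + 1 := Nat.lt_floor_add_one _
    have he : (1/2 : ℝ) ^ n * 2 ^ n = 1 := by
      rw [div_pow, one_pow, div_mul_cancel₀]
      exact ne_of_gt h2n
    rw [hc_def, le_div_iff₀ h2n]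
    nlinarith
  have hcθ : Filter.Tendsto c Filter.atTop (nhds θ) := by
    have hlow : Filter.Tendsto (fun n : ℕ => θ - (1/2 : ℝ) ^ n) Filter.atTop (nhds θ) := by
      have := tendsto_pow_atTop_nhds_zero_of_lt_one (by norm_num : (0:ℝ) ≤ 1/2)
        (by norm_num : (1/2:ℝ) < 1)
      simpa using (tendsto_const_nhds.sub this)
    exact tendsto_of_tendsto_of_tendsto_of_le_of_le hlow tendsto_const_nhds hlb hub
  have hk : ∀ n, ⌊θ * 2 ^ n⌋₊ ≤ 2 ^ n := by
    intro n
    have : θ * 2 ^ n ≤ ((2 ^ n : ℕ) : ℝ) := by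
      push_cast
      nlinarith [pow_pos (by norm_num : (0:ℝ) < 2) n]
    calc ⌊θ * 2 ^ n⌋₊ ≤ ⌊((2 ^ n : ℕ) : ℝ)⌋₊ := Nat.floor_le_floor this
      _ = 2 ^ n := Nat.floor_natCast _
  have key : ∀ n, g (c n) ≤ (1 - c n) * g 0 + c n * g 1 := fun n =>
    aux_dyadic hm n _ (hk n)
  refine le_of_tendsto_of_tendsto' ((hc.tendsto θ).comp hcθ) ?_ key
  exact ((tendsto_const_nhds.sub hcθ).mul tendsto_const_nhds).add (hcθ.mul tendsto_const_nhds)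

/-- Log-convexity style interpolation from the Cauchy–Schwarz midpoint bound. -/
lemma logconv_interp {f : ℝ → ℝ} (hc : Continuous f) (hpos : ∀ s, 0 < f s)
    (hm : ∀ s t : ℝ, f ((s + t) / 2) ≤ Real.sqrt (f s * f t))
    {θ : ℝ} (h0 : 0 ≤ θ) (h1 : θ ≤ 1) :
    f θ ≤ f 0 ^ (1 - θ) * f 1 ^ θ := by
  set g : ℝ → ℝ := fun s => Real.log (f s) with hg
  have hgc : Continuous g := hc.log fun s => (hpos s).ne'
  have hgm : ∀ s t : ℝ, g ((s + t) / 2) ≤ (g s + g t) / 2 := by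
    intro s t
    have h1' := hm s t
    have h2' : Real.log (f ((s+t)/2)) ≤ Real.log (Real.sqrt (f s * f t)) :=
      Real.log_le_log (hpos _) h1'
    rw [Real.log_sqrt (mul_pos (hpos s) (hpos t)).le, Real.log_mul (hpos s).ne' (hpos t).ne'] at h2'
    simpa [hg] using h2'
  have hkey := midpt_interp hgc hgm h0 h1
  calc f θ = Real.exp (g θ) := (Real.exp_log (hpos θ)).symm
    _ ≤ Real.exp ((1 - θ) * g 0 + θ * g 1) := Real.exp_le_exp.2 hkey
    _ = f 0 ^ (1 - θ) * f 1 ^ θ := by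
        rw [Real.exp_add, Real.rpow_def_of_pos (hpos 0), Real.rpow_def_of_pos (hpos 1),
          mul_comm (Real.log (f 0)), mul_comm (Real.log (f 1))]

/-- Lemma on the computational error: for a bounded positive self-adjoint
operator `T`, `λ > 0`, an orthogonal projection `P` and `u ∈ [0,1/2]`,
`C_u(P,λ) = ‖(Id−P)(T+λ)^u‖ ≤ C_{1/2}(P,λ)^{2u}`.  The fractional powers
`u ↦ (T+λ)^u` are given as the (unique) continuous one-parameter semigroup `Q` of positive
self-adjoint operators with `Q 0 = Id` and `Q 1 = T + λ·Id` (functional calculus). -/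

theorem stmt12 {H : Type*} [NormedAddCommGroup H] [InnerProductSpace ℝ H] [CompleteSpace H]
    (T : H →L[ℝ] H)
    (hTsa : ∀ u v : H, ⟪T u, v⟫_ℝ = ⟪u, T v⟫_ℝ) (hTpos : ∀ v : H, 0 ≤ ⟪T v, v⟫_ℝ)
    (lam : ℝ) (hlam : 0 < lam)
    (P : H →L[ℝ] H) (S : Submodule ℝ H) (hP : IsOrthoProjOnto P S)
    (Q : ℝ → H →L[ℝ] H) (hQcont : Continuous Q)
    (hQzero : Q 0 = 1) (hQone : Q 1 = T + lam • (1 : H →L[ℝ] H))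
    (hQadd : ∀ s t : ℝ, Q (s + t) = Q s ∘L Q t)
    (hQsa : ∀ (s : ℝ) (u v : H), ⟪Q s u, v⟫_ℝ = ⟪u, Q s v⟫_ℝ)
    (hQpos : ∀ (s : ℝ) (v : H), 0 ≤ ⟪Q s v, v⟫_ℝ)
    (u : ℝ) (hu : u ∈ Set.Icc (0:ℝ) (1/2)) :
    ‖((1 : H →L[ℝ] H) - P) ∘L Q u‖ ≤ ‖((1 : H →L[ℝ] H) - P) ∘L Q (1/2)‖ ^ (2 * u) := by
  obtain ⟨hu0, hu1⟩ := hu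
  set R : H →L[ℝ] H := (1 : H →L[ℝ] H) - P with hR
  have hPP : ∀ x : H, P (P x) = P x := fun x => by
    have := ContinuousLinearMap.ext_iff.mp hP.1 x
    simpa using this
  have hRsym : ∀ x y : H, ⟪R x, y⟫_ℝ = ⟪x, R y⟫_ℝ := by
    intro x y
    simp only [hR, ContinuousLinearMap.sub_apply, ContinuousLinearMap.one_apply,
      inner_sub_left, inner_sub_right, hP.2.1 x y]
  have hRidem : ∀ x : H, R (R x) = R x := by
    intro x
    simp [hR, ContinuousLinearMap.sub_apply, ContinuousLinearMap.one_apply, map_sub, hPP x]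
  have hRnorm : ∀ x : H, ‖R x‖ ≤ ‖x‖ := by
    intro x
    have h1 : ‖R x‖ ^ 2 = ⟪x, R x⟫_ℝ := by
      rw [← real_inner_self_eq_norm_sq]
      calc ⟪R x, R x⟫_ℝ = ⟪x, R (R x)⟫_ℝ := hRsym x (R x)
        _ = ⟪x, R x⟫_ℝ := by rw [hRidem x]
    have h2 : ⟪x, R x⟫_ℝ ≤ ‖x‖ * ‖R x‖ := real_inner_le_norm x (R x)
    nlinarith [norm_nonneg (R x), norm_nonneg x]
  have hRadj : ContinuousLinearMap.adjoint R = R :=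
    (LinearMap.IsSymmetric.isSelfAdjoint (A := R) fun x y => hRsym x y).adjoint_eq
  have hQadj : ∀ s : ℝ, ContinuousLinearMap.adjoint (Q s) = Q s := fun s =>
    (LinearMap.IsSymmetric.isSelfAdjoint (A := Q s) fun x y => hQsa s x y).adjoint_eq
  have hswap : ∀ s : ℝ, ‖Q s ∘L R‖ = ‖R ∘L Q s‖ := by
    intro s
    have hadj : ContinuousLinearMap.adjoint (R ∘L Q s) = Q s ∘L R := by
      rw [ContinuousLinearMap.adjoint_comp, hRadj, hQadj]
    rw [← hadj]
    exact LinearIsometryEquiv.norm_map ContinuousLinearMap.adjoint (R ∘L Q s)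
  have hQhalf : ∀ s : ℝ, Q s = Q (s/2) ∘L Q (s/2) := by
    intro s
    have h := hQadd (s/2) (s/2)
    rwa [add_halves] at h
  rcases eq_or_lt_of_le hu0 with hu0' | hu0'
  · -- u = 0
    rw [← hu0', mul_zero, Real.rpow_zero, hQzero]
    have hone : R ∘L (1 : H →L[ℝ] H) = R := by ext x; simp
    rw [hone]
    exact R.opNorm_le_bound zero_le_one fun x => by simpa using hRnorm x
  · -- 0 < u
    set M : ℝ := ‖R ∘L Q (1/2)‖ with hM
    have hMnn : (0:ℝ) ≤ M := norm_nonneg _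
    rw [← hswap u]
    refine ContinuousLinearMap.opNorm_le_bound _ (Real.rpow_nonneg hMnn _) fun x => ?_
    rw [ContinuousLinearMap.comp_apply]
    set y : H := R x with hy
    by_cases hy0 : y = 0
    · rw [hy0, map_zero, norm_zero]
      positivity
    have hx0 : x ≠ 0 := fun h => hy0 (by rw [hy, h, map_zero])
    have hxpos : (0:ℝ) < ‖x‖ := norm_pos_iff.mpr hx0
    set f : ℝ → ℝ := fun s => ⟪Q s y, y⟫_ℝ with hf
    have hfsq : ∀ s : ℝ, f s = ‖Q (s/2) y‖ ^ 2 := by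
      intro s
      calc f s = ⟪Q s y, y⟫_ℝ := rfl
        _ = ⟪Q (s/2) (Q (s/2) y), y⟫_ℝ := by rw [hQhalf s]; rfl
        _ = ⟪Q (s/2) y, Q (s/2) y⟫_ℝ := hQsa (s/2) (Q (s/2) y) y
        _ = ‖Q (s/2) y‖ ^ 2 := real_inner_self_eq_norm_sq _
    have hQy0 : ∀ s : ℝ, Q s y ≠ 0 := by
      intro s hzero
      apply hy0
      have hinv : Q (-s) (Q s y) = y := by
        rw [← ContinuousLinearMap.comp_apply, ← hQadd, neg_add_cancel, hQzero]
        rfl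
      rw [← hinv, hzero, map_zero]
    have hfpos : ∀ s, 0 < f s := by
      intro s
      rw [hfsq s]
      exact pow_pos (norm_pos_iff.mpr (hQy0 (s/2))) 2
    have hQyc : Continuous fun s : ℝ => Q s y :=
      (ContinuousLinearMap.apply ℝ H y).continuous.comp hQcont
    have hfc : Continuous f := hQyc.inner continuous_const
    have hfm : ∀ s t : ℝ, f ((s + t) / 2) ≤ Real.sqrt (f s * f t) := by
      intro s t
      have h1 : f ((s + t) / 2) = ⟪Q (t/2) y, Q (s/2) y⟫_ℝ := by
        calc f ((s + t) / 2) = ⟪Q ((s + t)/2) y, y⟫_ℝ := rfl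
          _ = ⟪Q (s/2) (Q (t/2) y), y⟫_ℝ := by
              rw [show (s + t)/2 = s/2 + t/2 by ring, hQadd]; rfl
          _ = ⟪Q (t/2) y, Q (s/2) y⟫_ℝ := hQsa (s/2) (Q (t/2) y) y
      have h2 : ⟪Q (t/2) y, Q (s/2) y⟫_ℝ ≤ ‖Q (t/2) y‖ * ‖Q (s/2) y‖ :=
        real_inner_le_norm _ _
      have h3 : Real.sqrt (f s * f t) = ‖Q (s/2) y‖ * ‖Q (t/2) y‖ := by
        rw [hfsq s, hfsq t, Real.sqrt_mul (by positivity), Real.sqrt_sq (norm_nonneg _),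
          Real.sqrt_sq (norm_nonneg _)]
      rw [h1, h3, mul_comm]
      exact h2
    have hinterp := logconv_interp hfc hfpos hfm (θ := 2 * u) (by linarith) (by linarith)
    have hf0le : f 0 ≤ ‖x‖ ^ 2 := by
      have : f 0 = ‖y‖ ^ 2 := by
        calc f 0 = ⟪Q 0 y, y⟫_ℝ := rfl
          _ = ⟪y, y⟫_ℝ := by rw [hQzero]; rfl
          _ = ‖y‖ ^ 2 := real_inner_self_eq_norm_sq _
      rw [this]
      have h4 := hRnorm x
      rw [← hy] at h4
      nlinarith [norm_nonneg y]
    have hf1le : f 1 ≤ (M * ‖x‖) ^ 2 := by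
      rw [hfsq 1]
      have h4 : ‖(Q (1/2) ∘L R) x‖ ≤ ‖Q (1/2) ∘L R‖ * ‖x‖ := (Q (1/2) ∘L R).le_opNorm x
      rw [hswap (1/2), ← hM] at h4
      rw [ContinuousLinearMap.comp_apply, ← hy] at h4
      nlinarith [norm_nonneg (Q (1/2) y)]
    have hMpos : (0:ℝ) < M := by
      rcases hMnn.lt_or_eq with h | h
      · exact h
      · exfalso
        have h5 := (hfpos 1).trans_le hf1le
        rw [← h] at h5
        nlinarith
    have hrhs : (‖x‖ ^ 2) ^ (1 - 2*u) * ((M * ‖x‖) ^ 2) ^ (2*u) = (M ^ (2*u) * ‖x‖) ^ 2 := by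
      have e1 : (‖x‖ ^ 2 : ℝ) ^ (1 - 2*u) * (‖x‖ ^ 2) ^ (2*u) = ‖x‖ ^ 2 := by
        rw [← Real.rpow_add (by positivity)]
        norm_num
      have e2 : ((M ^ 2 : ℝ)) ^ (2*u) = (M ^ (2*u)) ^ 2 := by
        rw [← Real.rpow_natCast M 2, ← Real.rpow_natCast (M ^ (2*u)) 2,
          ← Real.rpow_mul hMnn, ← Real.rpow_mul hMnn]
        norm_num [mul_comm]
      calc (‖x‖ ^ 2) ^ (1 - 2*u) * ((M * ‖x‖) ^ 2) ^ (2*u)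
          = (‖x‖ ^ 2) ^ (1 - 2*u) * ((M ^ 2) ^ (2*u) * (‖x‖ ^ 2) ^ (2*u)) := by
            rw [mul_pow, Real.mul_rpow (by positivity) (by positivity)]
        _ = ((‖x‖ ^ 2) ^ (1 - 2*u) * (‖x‖ ^ 2) ^ (2*u)) * (M ^ 2) ^ (2*u) := by ring
        _ = ‖x‖ ^ 2 * (M ^ (2*u)) ^ 2 := by rw [e1, e2]
        _ = (M ^ (2*u) * ‖x‖) ^ 2 := by ring
    have hchain : f (2*u) ≤ (M ^ (2*u) * ‖x‖) ^ 2 := by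
      rw [← hrhs]
      refine hinterp.trans ?_
      have hb1 : f 0 ^ (1 - 2*u) ≤ (‖x‖ ^ 2) ^ (1 - 2*u) :=
        Real.rpow_le_rpow (hfpos 0).le hf0le (by linarith)
      have hb2 : f 1 ^ (2*u) ≤ ((M * ‖x‖) ^ 2) ^ (2*u) :=
        Real.rpow_le_rpow (hfpos 1).le hf1le (by linarith)
      exact mul_le_mul hb1 hb2 (Real.rpow_nonneg (hfpos 1).le _)
        (Real.rpow_nonneg (by positivity) _)
    have hfin : ‖Q u y‖ ^ 2 ≤ (M ^ (2*u) * ‖x‖) ^ 2 := by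
      have h6 : ‖Q u y‖ ^ 2 = f (2*u) := by
        rw [hfsq (2*u)]
        norm_num
      rw [h6]
      exact hchain
    calc ‖Q u y‖ = Real.sqrt (‖Q u y‖ ^ 2) := (Real.sqrt_sq (norm_nonneg _)).symm
      _ ≤ Real.sqrt ((M ^ (2*u) * ‖x‖) ^ 2) := Real.sqrt_le_sqrt hfin
      _ = M ^ (2*u) * ‖x‖ := Real.sqrt_sq (by positivity)
end
end

section
/- Let m ∈ ℕ, p₁,…,p_m ∈ (0,1] with Σ_j p_j = 1, p_max := max_j p_j, and suppose each local effective dimension satisfies N(T_j,λ) ≤ C_γ p_j^γ λ^{−γ} for all λ ∈ (0,1] (which holds when the global covariance operator T has blocks p_j⁻¹T_j and N(T,λ) ≤ C_γλ^{−γ}). Fix r ∈ (0,1/2], γ ∈ (0,1], σ, R > 0 and let λ_n := min(1, (σ²/(R²n))^{1/(2r+1+γ)}). Then there exists n₀ < ∞, depending only on m, p_max, C_γ, r, γ and R/σ (and of order m^{(2r+γ+1)/(2r)} in its dependence on m), such that for all n > n₀ and all j ∈ {1,…,m}, B_{n/m}(T_j, λ_n) ≤ 2, where B_k(T_j,λ)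 := 1 + (2/(kλ) + √(N(T_j,λ)/(kλ)))². -/
open MeasureTheory ProbabilityTheory Real Filter
open scoped ENNReal NNReal BigOperators InnerProductSpace

noncomputable section

lemma bconst_aux {ι : Type*} (μ : ι → ℝ) (hμ : ∀ i, 0 ≤ μ i) {k lam Cγ γ : ℝ}
    (hk : 0 < k) (hlam0 : 0 < lam) (hlam1 : lam ≤ 1) (hγ0 : 0 < γ) (hCγ : 0 < Cγ)
    (hN : effDim μ lam ≤ Cγ * lam ^ (-γ))
    (hkey : 4 * (1 + Cγ) ≤ k * lam ^ (1 + γ)) :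
    Bconst μ k lam ≤ 2 := by
  have hlg : lam ^ (1 + γ) ≤ lam := by
    calc lam ^ (1 + γ) ≤ lam ^ (1 : ℝ) :=
          Real.rpow_le_rpow_of_exponent_ge hlam0 hlam1 (by linarith)
      _ = lam := Real.rpow_one lam
  have hkl4 : 4 ≤ k * lam := by
    have h1 : k * lam ^ (1 + γ) ≤ k * lam := mul_le_mul_of_nonneg_left hlg hk.le
    nlinarith
  have hkl0 : 0 < k * lam := mul_pos hk hlam0
  have h1 : 2 / (k * lam) ≤ 1 / 2 := by
    rw [div_le_div_iff₀ hkl0 (by norm_num)]; linarith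
  have hpow : lam ^ (-γ) * lam ^ (1 + γ) = lam := by
    rw [← Real.rpow_add hlam0, show -γ + (1 + γ) = (1:ℝ) by ring, Real.rpow_one]
  have hNnn : 0 ≤ effDim μ lam :=
    tsum_nonneg fun i => div_nonneg (hμ i) (add_nonneg (hμ i) hlam0.le)
  have hlgn : 0 < lam ^ (-γ) := Real.rpow_pos_of_pos hlam0 _
  have h2 : effDim μ lam / (k * lam) ≤ 1 / 4 := by
    rw [div_le_div_iff₀ hkl0 (by norm_num)]
    have h3 : lam ^ (-γ) * (4 * (1 + Cγ)) ≤ lam ^ (-γ) * (k * lam ^ (1 + γ)) :=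
      mul_le_mul_of_nonneg_left hkey hlgn.le
    have e1 : lam ^ (-γ) * (k * lam ^ (1 + γ)) = k * lam := by
      calc lam ^ (-γ) * (k * lam ^ (1 + γ)) = k * (lam ^ (-γ) * lam ^ (1 + γ)) := by ring
        _ = k * lam := by rw [hpow]
    nlinarith
  have hsq : Real.sqrt (effDim μ lam / (k * lam)) ≤ 1 / 2 := by
    have h4 := Real.sqrt_le_sqrt h2
    rwa [show (1/4 : ℝ) = (1/2)^2 by norm_num, Real.sqrt_sq (by norm_num)] at h4
  have hx : 2 / (k * lam) + Real.sqrt (effDim μ lam / (k * lam)) ≤ 1 := by linarith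
  have hx0 : 0 ≤ 2 / (k * lam) + Real.sqrt (effDim μ lam / (k * lam)) :=
    add_nonneg (by positivity) (Real.sqrt_nonneg _)
  unfold Bconst
  nlinarith [sq_nonneg (2 / (k * lam) + Real.sqrt (effDim μ lam / (k * lam)))]

/-- if the local effective dimensions satisfy
`N(T_j,λ) ≤ C_γ p_j^γ λ^{-γ}` then, with `λ_n = min(1, (σ²/(R²n))^{1/(2r+1+γ)})`,
one has `B_{n/m}(T_j, λ_n) ≤ 2` for every `j`, provided `n > n₀` with
`n₀ = c·m^{(2r+γ+1)/(2r)}`. -/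
theorem stmt17 (m : ℕ) [NeZero m]
    (H : Fin m → Type*) [∀ j, NormedAddCommGroup (H j)] [∀ j, InnerProductSpace ℝ (H j)]
    [∀ j, CompleteSpace (H j)]
    (T : ∀ j, H j →L[ℝ] H j) (b : ∀ j, HilbertBasis ℕ ℝ (H j)) (μ : Fin m → ℕ → ℝ)
    (hμnn : ∀ j i, 0 ≤ μ j i) (hμsum : ∀ j, Summable (μ j))
    (hdiag : ∀ j i, T j (b j i) = μ j i • b j i)
    (p : Fin m → ℝ) (hp : ∀ j, p j ∈ Set.Ioc (0:ℝ) 1) (hpsum : ∑ j, p j = 1)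
    (pmax : ℝ) (hpmax : IsGreatest (Set.range p) pmax)
    (Cγ γ r σ R : ℝ) (hCγ : 0 < Cγ) (hγ : γ ∈ Set.Ioc (0:ℝ) 1)
    (hr : r ∈ Set.Ioc (0:ℝ) (1/2)) (hσ : 0 < σ) (hR : 0 < R)
    (hcap : ∀ j, ∀ lam ∈ Set.Ioc (0:ℝ) 1, effDim (μ j) lam ≤ Cγ * p j ^ γ * lam ^ (-γ)) :
    ∃ c : ℝ, 0 < c ∧ ∀ n : ℕ, c * (m : ℝ) ^ ((2 * r + γ + 1) / (2 * r)) < n → ∀ j,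
      Bconst (μ j) ((n : ℝ) / m)
        (min 1 ((σ ^ 2 / (R ^ 2 * n)) ^ ((1:ℝ) / (2 * r + 1 + γ)))) ≤ 2 := by
  obtain ⟨hγ0, hγ1⟩ := hγ
  obtain ⟨hr0, hr2⟩ := hr
  have hs0 : 0 < 2 * r + 1 + γ := by linarith
  set s : ℝ := 2 * r + 1 + γ with hs_def
  set a : ℝ := (1 + γ) / s with ha_def
  have ha0 : 0 < a := div_pos (by linarith) hs0
  have ha1 : a < 1 := (div_lt_one hs0).mpr (by simp only [hs_def]; linarith)
  set q : ℝ := 1 - a with hq_def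
  have hq0 : 0 < q := by simp only [hq_def]; linarith
  set M : ℝ := 4 * (1 + Cγ) with hM_def
  have hM0 : 0 < M := by simp only [hM_def]; linarith
  set X : ℝ := M * (R ^ 2 / σ ^ 2) ^ a with hX_def
  have hX0 : 0 < X := mul_pos hM0 (Real.rpow_pos_of_pos (by positivity) _)
  set c : ℝ := max M (X ^ (1 / q)) with hc_def
  have hcM : M ≤ c := le_max_left _ _
  have hc0 : 0 < c := lt_of_lt_of_le hM0 hcM
  refine ⟨c, hc0, ?_⟩
  intro n hn j
  set β : ℝ := (2 * r + γ + 1) / (2 * r) with hβ_def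
  have hβ1 : 1 ≤ β := (one_le_div (by linarith)).mpr (by linarith)
  have hm1 : (1 : ℝ) ≤ (m : ℝ) := by
    exact_mod_cast Nat.one_le_iff_ne_zero.mpr (NeZero.ne m)
  have hm0 : (0 : ℝ) < m := by linarith
  have hmβ : (m : ℝ) ≤ (m : ℝ) ^ β := by
    calc (m : ℝ) = (m : ℝ) ^ (1 : ℝ) := (Real.rpow_one _).symm
      _ ≤ (m : ℝ) ^ β := Real.rpow_le_rpow_of_exponent_le hm1 hβ1
  have hn0 : (0 : ℝ) < n := lt_trans (by positivity) hn
  have hcmn : c * m ≤ n := le_trans (mul_le_mul_of_nonneg_left hmβ hc0.le) hn.le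
  have hbase0 : (0 : ℝ) < σ ^ 2 / (R ^ 2 * n) := by positivity
  set t : ℝ := (σ ^ 2 / (R ^ 2 * n)) ^ ((1:ℝ) / s) with ht_def
  have ht0 : 0 < t := Real.rpow_pos_of_pos hbase0 _
  set lam : ℝ := min 1 t with hlam_def
  have hlam0 : 0 < lam := lt_min one_pos ht0
  have hlam1 : lam ≤ 1 := min_le_left _ _
  have hk0 : (0 : ℝ) < (n : ℝ) / m := div_pos hn0 hm0
  have hkey : M ≤ (n : ℝ) / m * lam ^ (1 + γ) := by
    rcases le_total 1 t with h | h
    · have hl : lam = 1 := min_eq_left h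
      rw [hl, Real.one_rpow, mul_one, le_div_iff₀ hm0]
      calc M * m ≤ c * m := mul_le_mul_of_nonneg_right hcM hm0.le
        _ ≤ n := hcmn
    · have hl : lam = t := min_eq_right h
      have e1 : t ^ (1 + γ) = (σ ^ 2 / (R ^ 2 * n)) ^ a := by
        rw [ht_def, ← Real.rpow_mul hbase0.le]
        congr 1
        rw [ha_def]; ring
      have e2 : (σ ^ 2 / (R ^ 2 * n)) ^ a = (σ ^ 2 / R ^ 2) ^ a * ((n : ℝ) ^ a)⁻¹ := by
        rw [show σ ^ 2 / (R ^ 2 * n) = σ ^ 2 / R ^ 2 * ((n : ℝ))⁻¹ by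
              field_simp,
            Real.mul_rpow (by positivity) (by positivity), Real.inv_rpow hn0.le]
      have e3 : (n : ℝ) * ((n : ℝ) ^ a)⁻¹ = (n : ℝ) ^ q := by
        rw [hq_def, Real.rpow_sub hn0, Real.rpow_one, div_eq_mul_inv]
      have hXc : X ≤ c ^ q := by
        have h5 : X ^ (1 / q) ≤ c := le_max_right _ _
        calc X = (X ^ ((1:ℝ) / q)) ^ q := by
              rw [← Real.rpow_mul hX0.le, one_div, inv_mul_cancel₀ hq0.ne', Real.rpow_one]
          _ ≤ c ^ q := Real.rpow_le_rpow (Real.rpow_nonneg hX0.le _) h5 hq0.le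
      have e4 : X * m ≤ (n : ℝ) ^ q := by
        have h6 : (c * (m : ℝ) ^ β) ^ q ≤ (n : ℝ) ^ q :=
          Real.rpow_le_rpow (by positivity) hn.le hq0.le
        have e7 : (c * (m : ℝ) ^ β) ^ q = c ^ q * m := by
          rw [Real.mul_rpow hc0.le (Real.rpow_nonneg hm0.le _),
              ← Real.rpow_mul hm0.le,
              show β * q = 1 by rw [hβ_def, hq_def, ha_def, hs_def]; field_simp; ring,
              Real.rpow_one]
        calc X * m ≤ c ^ q * m := mul_le_mul_of_nonneg_right hXc hm0.le
          _ = (c * (m : ℝ) ^ β) ^ q := e7.symm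
          _ ≤ (n : ℝ) ^ q := h6
      have e5 : (σ ^ 2 / R ^ 2) ^ a * (R ^ 2 / σ ^ 2) ^ a = 1 := by
        rw [← Real.mul_rpow (by positivity) (by positivity),
            show σ ^ 2 / R ^ 2 * (R ^ 2 / σ ^ 2) = 1 by field_simp, Real.one_rpow]
      have hsa : (0:ℝ) < (σ ^ 2 / R ^ 2) ^ a := Real.rpow_pos_of_pos (by positivity) _
      have e6 : (n : ℝ) / m * lam ^ (1 + γ) = (σ ^ 2 / R ^ 2) ^ a * (n : ℝ) ^ q / m := by
        rw [hl, e1, e2, ← e3]; ring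
      rw [e6, le_div_iff₀ hm0]
      calc M * m = (σ ^ 2 / R ^ 2) ^ a * (X * m) := by
            rw [hX_def]; linear_combination (-(M * (m:ℝ))) * e5
        _ ≤ (σ ^ 2 / R ^ 2) ^ a * (n : ℝ) ^ q := mul_le_mul_of_nonneg_left e4 hsa.le
  have hN : effDim (μ j) lam ≤ Cγ * lam ^ (-γ) := by
    have h7 := hcap j lam ⟨hlam0, hlam1⟩
    have hp1 : p j ^ γ ≤ 1 := Real.rpow_le_one (hp j).1.le (hp j).2 hγ0.le
    have h8 : Cγ * p j ^ γ * lam ^ (-γ) ≤ Cγ * 1 * lam ^ (-γ) :=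
      mul_le_mul_of_nonneg_right (mul_le_mul_of_nonneg_left hp1 hCγ.le)
        (Real.rpow_nonneg hlam0.le _)
    calc effDim (μ j) lam ≤ Cγ * p j ^ γ * lam ^ (-γ) := h7
      _ ≤ Cγ * 1 * lam ^ (-γ) := h8
      _ = Cγ * lam ^ (-γ) := by ring
  exact bconst_aux (μ j) (hμnn j) hk0 hlam0 hlam1 hγ0 hCγ hN hkey
end
end

section
/- Let T be a positive self-adjoint trace-class operator on a separable real Hilbert space satisfying N(T,λ) ≤ C_γλ^{−γ} for all λ ∈ (0,1], for some γ ∈ (0,1] and C_γ < ∞. Fix r ∈ (0,1/2] and σ, R > 0, and let λ_n := min(1, (σ²/(R²n))^{1/(2r+1+γ)}). Then there exists n₀ < ∞ (depending only on C_γ, r, γ and R/σ) such that for all n ≥ n₀, B_n(T,λ_n) ≤ 2, where B_n(T,λ) := 1 + (2/(nλ) + √(N(T,λ)/(nλ)))². -/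
open MeasureTheory ProbabilityTheory Real Filter
open scoped ENNReal NNReal BigOperators InnerProductSpace

noncomputable section

/-- under the capacity condition `N(T,λ) ≤ C_γ λ^{-γ}`, with
`λ_n = min(1, (σ²/(R²n))^{1/(2r+1+γ)})` one has `B_n(T,λ_n) ≤ 2` for all `n`
sufficiently large.  The positive self-adjoint trace-class operator `T` is given
through a diagonalizing Hilbert basis `b` with summable nonnegative eigenvalues `μ`. -/
theorem stmt18 {H : Type*} [NormedAddCommGroup H] [InnerProductSpace ℝ H] [CompleteSpace H]
    (T : H →L[ℝ] H) (b : HilbertBasis ℕ ℝ H) (μ : ℕ → ℝ)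
    (hμnn : ∀ i, 0 ≤ μ i) (hμsum : Summable μ)
    (hdiag : ∀ i, T (b i) = μ i • b i)
    (γ Cγ r σ R : ℝ) (hγ : γ ∈ Set.Ioc (0:ℝ) 1) (hCγ : 0 < Cγ)
    (hr : r ∈ Set.Ioc (0:ℝ) (1/2)) (hσ : 0 < σ) (hR : 0 < R)
    (hcap : ∀ lam ∈ Set.Ioc (0:ℝ) 1, effDim μ lam ≤ Cγ * lam ^ (-γ)) :
    ∃ n₀ : ℕ, ∀ n : ℕ, n₀ ≤ n →
      Bconst μ (n : ℝ) (min 1 ((σ ^ 2 / (R ^ 2 * n)) ^ ((1:ℝ) / (2 * r + 1 + γ)))) ≤ 2 := by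
  obtain ⟨hγ0, hγ1⟩ := hγ
  obtain ⟨hr0, hr1⟩ := hr
  set α : ℝ := 1 / (2 * r + 1 + γ) with hα_def
  have hden : 0 < 2 * r + 1 + γ := by linarith
  have hα0 : 0 < α := by positivity
  have hα1 : α * (1 + γ) < 1 := by
    rw [hα_def, div_mul_eq_mul_div, div_lt_one hden]; linarith
  have hαlt1 : α < 1 := by rw [hα_def, div_lt_one hden]; linarith
  set c : ℝ := σ ^ 2 / R ^ 2 with hc_def
  have hc0 : 0 < c := by positivity
  set lam : ℕ → ℝ := fun n => min 1 ((σ ^ 2 / (R ^ 2 * n)) ^ α) with hlam_def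
  have hlam_eq : ∀ n : ℕ, 0 < n → (σ ^ 2 / (R ^ 2 * (n:ℝ))) = c / n := fun n hn => by
    rw [hc_def, div_div]
  -- key: for β < 1, n * (c/n)^β → ∞
  have key : ∀ β : ℝ, β < 1 → Tendsto (fun n : ℕ => (n:ℝ) * (c / n) ^ β) atTop atTop := by
    intro β hβ
    have h1 : Tendsto (fun n : ℕ => c ^ β * (n:ℝ) ^ (1 - β)) atTop atTop := by
      apply Tendsto.const_mul_atTop (Real.rpow_pos_of_pos hc0 β)
      exact (tendsto_rpow_atTop (by linarith)).comp tendsto_natCast_atTop_atTop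
    apply h1.congr'
    filter_upwards [eventually_gt_atTop 0] with n hn
    have hn0 : (0:ℝ) < n := by exact_mod_cast hn
    rw [Real.div_rpow hc0.le hn0.le, Real.rpow_sub hn0, Real.rpow_one]
    field_simp
  -- eventually lam n = (c/n)^α
  have hlam_ev : ∀ᶠ n : ℕ in atTop, lam n = (c / n) ^ α := by
    filter_upwards [eventually_gt_atTop 0,
      tendsto_natCast_atTop_atTop.eventually_ge_atTop c] with n hn hcn
    have hn0 : (0:ℝ) < n := by exact_mod_cast hn
    rw [hlam_def]
    simp only [hlam_eq n hn]
    exact min_eq_right (Real.rpow_le_one (by positivity)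
      ((div_le_one hn0).mpr hcn) hα0.le)
  have hlam_pos : ∀ n : ℕ, 0 < n → 0 < lam n := by
    intro n hn
    have hn0 : (0:ℝ) < n := by exact_mod_cast hn
    rw [hlam_def]
    simp only [hlam_eq n hn]
    exact lt_min one_pos (Real.rpow_pos_of_pos (by positivity) α)
  have hA : Tendsto (fun n : ℕ => (n:ℝ) * lam n) atTop atTop := by
    apply (key α hαlt1).congr'
    filter_upwards [hlam_ev] with n hn
    rw [hn]
  have hB : Tendsto (fun n : ℕ => (n:ℝ) * lam n ^ (1 + γ)) atTop atTop := by
    apply (key (α * (1 + γ)) hα1).congr'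
    filter_upwards [hlam_ev, eventually_gt_atTop 0] with n hn hn'
    have hn0 : (0:ℝ) < n := by exact_mod_cast hn'
    rw [hn, ← Real.rpow_mul (by positivity)]
  have main : ∀ᶠ n : ℕ in atTop, Bconst μ (n : ℝ) (lam n) ≤ 2 := by
    filter_upwards [hA.eventually_ge_atTop 4, hB.eventually_ge_atTop (4 * Cγ),
      eventually_gt_atTop 0] with n h4 h4C hn
    have hn0 : (0:ℝ) < n := by exact_mod_cast hn
    have hl0 : 0 < lam n := hlam_pos n hn
    have hl1 : lam n ≤ 1 := min_le_left _ _
    have hnl : (0:ℝ) < n * lam n := by positivity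
    have hN0 : 0 ≤ effDim μ (lam n) :=
      tsum_nonneg fun i => div_nonneg (hμnn i) (add_nonneg (hμnn i) hl0.le)
    have hNcap : effDim μ (lam n) ≤ Cγ * lam n ^ (-γ) := hcap (lam n) ⟨hl0, hl1⟩
    -- first term
    have ha : 2 / ((n:ℝ) * lam n) ≤ 1 / 2 := by
      rw [div_le_div_iff₀ hnl (by norm_num)]; linarith
    have ha0 : 0 ≤ 2 / ((n:ℝ) * lam n) := by positivity
    -- second term
    have hid : Cγ * lam n ^ (-γ) / ((n:ℝ) * lam n) = Cγ / ((n:ℝ) * lam n ^ (1 + γ)) := by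
      rw [Real.rpow_add hl0, Real.rpow_one, Real.rpow_neg hl0.le]
      have h1 : lam n ^ γ ≠ 0 := (Real.rpow_pos_of_pos hl0 γ).ne'
      field_simp
    have hq : effDim μ (lam n) / ((n:ℝ) * lam n) ≤ 1 / 4 := by
      have h1 : effDim μ (lam n) / ((n:ℝ) * lam n)
          ≤ Cγ * lam n ^ (-γ) / ((n:ℝ) * lam n) := by gcongr
      have h2 : Cγ / ((n:ℝ) * lam n ^ (1 + γ)) ≤ 1 / 4 := by
        have hpos : (0:ℝ) < (n:ℝ) * lam n ^ (1 + γ) := by positivity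
        rw [div_le_div_iff₀ hpos (by norm_num)]; linarith
      calc effDim μ (lam n) / ((n:ℝ) * lam n)
          ≤ Cγ * lam n ^ (-γ) / ((n:ℝ) * lam n) := h1
        _ = Cγ / ((n:ℝ) * lam n ^ (1 + γ)) := hid
        _ ≤ 1 / 4 := h2
    have hb : Real.sqrt (effDim μ (lam n) / ((n:ℝ) * lam n)) ≤ 1 / 2 := by
      have := Real.sqrt_le_sqrt hq
      rwa [show (1/4 : ℝ) = (1/2) ^ 2 by norm_num, Real.sqrt_sq (by norm_num)] at this
    have hb0 : 0 ≤ Real.sqrt (effDim μ (lam n) / ((n:ℝ) * lam n)) := Real.sqrt_nonneg _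
    have hsum : 2 / ((n:ℝ) * lam n)
        + Real.sqrt (effDim μ (lam n) / ((n:ℝ) * lam n)) ≤ 1 := by linarith
    have hsq : (2 / ((n:ℝ) * lam n)
        + Real.sqrt (effDim μ (lam n) / ((n:ℝ) * lam n))) ^ 2 ≤ 1 :=
      pow_le_one₀ (by linarith) hsum
    simp only [Bconst]
    linarith
  obtain ⟨n₀, h⟩ := eventually_atTop.mp main
  exact ⟨n₀, fun n hn => h n hn⟩
end
end
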